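/- Let a ≥ 1 and let G_a be the square complex orthogonal design defined by G_1 = [[x_0, −x_1*],[x_1, x_0*]] and G_a = [[G_{a−1}, −x_a* I_{2^{a−1}}],[x_a I_{2^{a−1}}, G_{a−1}^H]], with complex variables x_0,…,x_a. Then for every assignment of complex values to x_0,…,x_a, the matrix satisfies G_a^H G_a = (|x_0|² + |x_1|² + ⋯ + |x_a|²) I_{2^a}. -/

import Mathlib

open Matrix

/-- The recursively-defined square complex orthogonal design of Tirkkonen–Hottinen,
evaluated at an assignment `x : ℕ → ℂ` of values to the complex variables:
`G_0 = [x 0]` and `G_{a+1} = [[G_a, -x_{a+1}* I], [x_{a+1} I, G_a^H]]`. -/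
def G (x : ℕ → ℂ) : ℕ → ℕ → ℕ → ℂ
  | 0, _, _ => x 0
  | a + 1, i, j =>
    if i < 2 ^ a then
      if j < 2 ^ a then G x a i j
      else if j = i + 2 ^ a then -(starRingEnd ℂ (x (a + 1))) else 0
    else
      if j < 2 ^ a then (if i = j + 2 ^ a then x (a + 1) else 0)
      else starRingEnd ℂ (G x a (j - 2 ^ a) (i - 2 ^ a))

/-- The `2^a × 2^a` matrix `G_a` evaluated at `x`. -/
def Gmat (x : ℕ → ℂ) (a : ℕ) : Matrix (Fin (2 ^ a)) (Fin (2 ^ a)) ℂ :=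
  fun i j => G x a i j

lemma pow_eq (a : ℕ) : 2 ^ a + 2 ^ a = 2 ^ (a+1) := by rw [pow_succ, mul_two]

noncomputable def S (x : ℕ → ℂ) (a : ℕ) : ℂ := ∑ l ∈ Finset.range (a + 1), ((‖x l‖ : ℂ)) ^ 2

lemma G_block (x : ℕ → ℂ) (a : ℕ) :
    (Gmat x (a+1)).submatrix
      (finSumFinEquiv.trans (finCongr (pow_eq a)))
      (finSumFinEquiv.trans (finCongr (pow_eq a))) =
    fromBlocks (Gmat x a) ((-(starRingEnd ℂ (x (a+1)))) • 1) ((x (a+1)) • 1) ((Gmat x a)ᴴ) := by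
  ext i j
  cases i with
  | inl i =>
    cases j with
    | inl j =>
      simp [Gmat, G, i.isLt, j.isLt]
    | inr j =>
      simp [Gmat, G, i.isLt, Matrix.one_apply, Fin.ext_iff]
      rcases eq_or_ne (j : ℕ) (i : ℕ) with h | h
      · simp [h]
      · simp [h, Ne.symm h]
  | inr i =>
    cases j with
    | inl j =>
      simp [Gmat, G, j.isLt, Matrix.one_apply, Fin.ext_iff]
    | inr j =>
      simp [Gmat, G, Matrix.conjTranspose_apply]

lemma key (x : ℕ → ℂ) : ∀ a, (Gmat x a)ᴴ * Gmat x a = S x a • 1 ∧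
    Gmat x a * (Gmat x a)ᴴ = S x a • 1 := by
  intro a
  induction a with
  | zero =>
    constructor <;>
    · ext i j
      fin_cases i; fin_cases j
      simp [Gmat, G, Matrix.mul_apply, S, Complex.conj_mul', Complex.mul_conj',
        Matrix.one_apply]
  | succ a ih =>
    obtain ⟨ih1, ih2⟩ := ih
    set c := x (a + 1) with hc
    set e : Fin (2^a) ⊕ Fin (2^a) ≃ Fin (2^(a+1)) := finSumFinEquiv.trans (finCongr (pow_eq a)) with he
    have hb := G_block x a
    have hS : S x (a+1) = S x a + (starRingEnd ℂ c) * c := by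
      simp [S, Finset.sum_range_succ, Complex.conj_mul', Complex.sq_norm, ← Complex.ofReal_pow, hc]
    constructor
    · apply (Matrix.reindex e.symm e.symm).injective
      simp only [Matrix.reindex_apply, Equiv.symm_symm]
      rw [← Matrix.submatrix_mul_equiv _ _ _ e, ← Matrix.conjTranspose_submatrix, hb]
      rw [Matrix.fromBlocks_conjTranspose, Matrix.fromBlocks_multiply]
      simp only [Matrix.conjTranspose_smul, Matrix.conjTranspose_one, Matrix.conjTranspose_conjTranspose,
        Matrix.conjTranspose_neg, Matrix.smul_mul, Matrix.mul_smul, Matrix.one_mul, Matrix.mul_one,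
        ih1, ih2, Matrix.submatrix_smul, Matrix.submatrix_one_equiv]
      rw [hS]
      ext i j
      cases i <;> cases j <;>
        simp [Matrix.one_apply, smul_smul] <;>
        split_ifs <;> ring
    · apply (Matrix.reindex e.symm e.symm).injective
      simp only [Matrix.reindex_apply, Equiv.symm_symm]
      rw [← Matrix.submatrix_mul_equiv _ _ _ e, ← Matrix.conjTranspose_submatrix, hb]
      rw [Matrix.fromBlocks_conjTranspose, Matrix.fromBlocks_multiply]
      simp only [Matrix.conjTranspose_smul, Matrix.conjTranspose_one, Matrix.conjTranspose_conjTranspose,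
        Matrix.conjTranspose_neg, Matrix.smul_mul, Matrix.mul_smul, Matrix.one_mul, Matrix.mul_one,
        ih1, ih2, Matrix.submatrix_smul, Matrix.submatrix_one_equiv]
      rw [hS]
      ext i j
      cases i <;> cases j <;>
        simp [Matrix.one_apply, smul_smul] <;>
        split_ifs <;> ring

/-- `G_a^H G_a = (|x_0|² + ⋯ + |x_a|²) I`. -/
theorem stmt19 (a : ℕ) (ha : 1 ≤ a) (x : ℕ → ℂ) :
    (Gmat x a)ᴴ * Gmat x a =
      (((∑ l ∈ Finset.range (a + 1), ‖x l‖ ^ 2 : ℝ) : ℂ)) •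
        (1 : Matrix (Fin (2 ^ a)) (Fin (2 ^ a)) ℂ) := by
  have := (key x a).1
  rw [this, S]
  push_cast
  rfl
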